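/- arXiv:1208.4736 — 2 statements merged into one kernel-verified Lean document; each statement's English description precedes it below -/
import Mathlib

section
/- Let A_1, A_2 > 0 and take (d_1,d_2) = (2,8), n = 10. On ℝ²×ℝ² define v(q) := e^{q_1 + 4q_2}, J(p) := (1/9)(p_1+p_2)² − p_1²/2 − p_2²/8, S(q) := A_1 e^{−q_1} + A_2 e^{−q_2}, the Ricci-flat Hamiltonian H(q,p) := v(q)^{-1}J(p) − S(q)v(q), and F(q,p) := −(1/72)(2p_1 − p_2)² e^{−q_1/2 − 7q_2} + A_1 e^{q_1/2 + q_2}. Then F is a generalized first integral of H: there exists a smooth function φ on ℝ²×ℝ² such that {F,H} = φ·H identically; in particular {F,H}(q,p) = 0 at every point (q,p) with H(q,p) = 0. -/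
/-- Partial derivative in the `i`-th `q`-coordinate. -/
noncomputable def pderivQ (F : (Fin 2 → ℝ) → (Fin 2 → ℝ) → ℝ) (i : Fin 2)
    (q p : Fin 2 → ℝ) : ℝ :=
  deriv (fun t => F (Function.update q i t) p) (q i)

/-- Partial derivative in the `i`-th `p`-coordinate. -/
noncomputable def pderivP (F : (Fin 2 → ℝ) → (Fin 2 → ℝ) → ℝ) (i : Fin 2)
    (q p : Fin 2 → ℝ) : ℝ :=
  deriv (fun t => F q (Function.update p i t)) (p i)

/-- Canonical Poisson bracket on `ℝ² × ℝ²`. -/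
noncomputable def poisson (F G : (Fin 2 → ℝ) → (Fin 2 → ℝ) → ℝ) (q p : Fin 2 → ℝ) : ℝ :=
  ∑ i : Fin 2, (pderivQ F i q p * pderivP G i q p - pderivP F i q p * pderivQ G i q p)

/-- The Ricci-flat Hamiltonian for `(d₁,d₂) = (2,8)`, `n = 10`:
`v(q) = e^{q₁+4q₂}`, `J(p) = (p₁+p₂)²/9 − p₁²/2 − p₂²/8`,
`S(q) = A₁e^{−q₁} + A₂e^{−q₂}`, `H = v⁻¹J − Sv`. -/
noncomputable def Ham (A1 A2 : ℝ) (q p : Fin 2 → ℝ) : ℝ :=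
  (Real.exp (q 0 + 4 * q 1))⁻¹ *
      ((1 / 9) * (p 0 + p 1) ^ 2 - (p 0) ^ 2 / 2 - (p 1) ^ 2 / 8) -
    (A1 * Real.exp (-(q 0)) + A2 * Real.exp (-(q 1))) * Real.exp (q 0 + 4 * q 1)

/-- The Dancer–Wang generalized first integral for `(d₁,d₂) = (2,8)`. -/
noncomputable def Fint (A1 : ℝ) (q p : Fin 2 → ℝ) : ℝ :=
  -(1 / 72) * (2 * p 0 - p 1) ^ 2 * Real.exp (-(q 0) / 2 - 7 * q 1) +
    A1 * Real.exp (q 0 / 2 + q 1)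

-- Key identity: {F,H} = φ·H with φ = -(1/36)(2p₀-p₁)e^{-q₀/2-7q₁}
lemma key (A1 A2 : ℝ) (q p : Fin 2 → ℝ) :
    poisson (Fint A1) (Ham A1 A2) q p =
      (-(1/36) * (2 * p 0 - p 1) * Real.exp (-(q 0) / 2 - 7 * q 1)) * Ham A1 A2 q p := by
  have hFq0 : pderivQ (Fint A1) 0 q p =
      (1/144) * (2 * p 0 - p 1) ^ 2 * Real.exp (-(q 0) / 2 - 7 * q 1) +
        (A1/2) * Real.exp (q 0 / 2 + q 1) := by
    unfold pderivQ
    have hfun : (fun t => Fint A1 (Function.update q 0 t) p) =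
        (fun t => -(1 / 72) * (2 * p 0 - p 1) ^ 2 * Real.exp (-t / 2 - 7 * q 1) +
          A1 * Real.exp (t / 2 + q 1)) := by
      funext t; simp [Fint, Function.update_apply]
    rw [hfun]
    have h1 : HasDerivAt (fun t : ℝ => -t / 2 - 7 * q 1) (-1 / 2) (q 0) := by
      simpa using (((hasDerivAt_id (q 0)).neg).div_const 2).sub_const (7 * q 1)
    have h2 : HasDerivAt (fun t : ℝ => t / 2 + q 1) (1 / 2) (q 0) := by
      simpa using ((hasDerivAt_id (q 0)).div_const 2).add_const (q 1)
    have H := (h1.exp.const_mul (-(1 / 72) * (2 * p 0 - p 1) ^ 2)).add (h2.exp.const_mul A1)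
    refine H.deriv.trans ?_; ring
  have hFq1 : pderivQ (Fint A1) 1 q p =
      (7/72) * (2 * p 0 - p 1) ^ 2 * Real.exp (-(q 0) / 2 - 7 * q 1) +
        A1 * Real.exp (q 0 / 2 + q 1) := by
    unfold pderivQ
    have hfun : (fun t => Fint A1 (Function.update q 1 t) p) =
        (fun t => -(1 / 72) * (2 * p 0 - p 1) ^ 2 * Real.exp (-(q 0) / 2 - 7 * t) +
          A1 * Real.exp (q 0 / 2 + t)) := by
      funext t; simp [Fint, Function.update_apply]
    rw [hfun]
    have h1 : HasDerivAt (fun t : ℝ => -(q 0) / 2 - 7 * t) (-7) (q 1) := by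
      simpa using HasDerivAt.const_sub (-(q 0) / 2) ((hasDerivAt_id (q 1)).const_mul 7)
    have h2 : HasDerivAt (fun t : ℝ => q 0 / 2 + t) 1 (q 1) := by
      simpa using (hasDerivAt_id (q 1)).const_add (q 0 / 2)
    have H := (h1.exp.const_mul (-(1 / 72) * (2 * p 0 - p 1) ^ 2)).add (h2.exp.const_mul A1)
    refine H.deriv.trans ?_; ring
  have hFp0 : pderivP (Fint A1) 0 q p =
      -(1/18) * (2 * p 0 - p 1) * Real.exp (-(q 0) / 2 - 7 * q 1) := by
    unfold pderivP
    have hfun : (fun t => Fint A1 q (Function.update p 0 t)) =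
        (fun t => -(1 / 72) * (2 * t - p 1) ^ 2 * Real.exp (-(q 0) / 2 - 7 * q 1) +
          A1 * Real.exp (q 0 / 2 + q 1)) := by
      funext t; simp [Fint, Function.update_apply]
    rw [hfun]
    have h1 : HasDerivAt (fun t : ℝ => 2 * t - p 1) 2 (p 0) := by
      simpa using ((hasDerivAt_id (p 0)).const_mul 2).sub_const (p 1)
    have H := (((h1.pow 2).const_mul (-(1/72) : ℝ)).mul_const
        (Real.exp (-(q 0) / 2 - 7 * q 1))).add_const (A1 * Real.exp (q 0 / 2 + q 1))
    refine H.deriv.trans ?_; push_cast; ring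
  have hFp1 : pderivP (Fint A1) 1 q p =
      (1/36) * (2 * p 0 - p 1) * Real.exp (-(q 0) / 2 - 7 * q 1) := by
    unfold pderivP
    have hfun : (fun t => Fint A1 q (Function.update p 1 t)) =
        (fun t => -(1 / 72) * (2 * p 0 - t) ^ 2 * Real.exp (-(q 0) / 2 - 7 * q 1) +
          A1 * Real.exp (q 0 / 2 + q 1)) := by
      funext t; simp [Fint, Function.update_apply]
    rw [hfun]
    have h1 : HasDerivAt (fun t : ℝ => 2 * p 0 - t) (-1) (p 1) := by
      simpa using HasDerivAt.const_sub (2 * p 0) (hasDerivAt_id (p 1))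
    have H := (((h1.pow 2).const_mul (-(1/72) : ℝ)).mul_const
        (Real.exp (-(q 0) / 2 - 7 * q 1))).add_const (A1 * Real.exp (q 0 / 2 + q 1))
    refine H.deriv.trans ?_; push_cast; ring
  have hHp0 : pderivP (Ham A1 A2) 0 q p =
      (Real.exp (q 0 + 4 * q 1))⁻¹ * ((2/9) * (p 0 + p 1) - p 0) := by
    unfold pderivP
    have hfun : (fun t => Ham A1 A2 q (Function.update p 0 t)) =
        (fun t => (Real.exp (q 0 + 4 * q 1))⁻¹ *
          ((1 / 9) * (t + p 1) ^ 2 - t ^ 2 / 2 - (p 1) ^ 2 / 8) -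
          (A1 * Real.exp (-(q 0)) + A2 * Real.exp (-(q 1))) * Real.exp (q 0 + 4 * q 1)) := by
      funext t; simp [Ham, Function.update_apply]
    rw [hfun]
    have h1 : HasDerivAt (fun t : ℝ => t + p 1) 1 (p 0) := by
      simpa using (hasDerivAt_id (p 0)).add_const (p 1)
    have H := (((((h1.pow 2).const_mul ((1:ℝ)/9)).sub
        ((hasDerivAt_pow 2 (p 0)).div_const 2)).sub_const ((p 1) ^ 2 / 8)).const_mul
        ((Real.exp (q 0 + 4 * q 1))⁻¹)).sub_const
        ((A1 * Real.exp (-(q 0)) + A2 * Real.exp (-(q 1))) * Real.exp (q 0 + 4 * q 1))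
    refine H.deriv.trans ?_; push_cast; ring
  have hHp1 : pderivP (Ham A1 A2) 1 q p =
      (Real.exp (q 0 + 4 * q 1))⁻¹ * ((2/9) * (p 0 + p 1) - p 1 / 4) := by
    unfold pderivP
    have hfun : (fun t => Ham A1 A2 q (Function.update p 1 t)) =
        (fun t => (Real.exp (q 0 + 4 * q 1))⁻¹ *
          ((1 / 9) * (p 0 + t) ^ 2 - (p 0) ^ 2 / 2 - t ^ 2 / 8) -
          (A1 * Real.exp (-(q 0)) + A2 * Real.exp (-(q 1))) * Real.exp (q 0 + 4 * q 1)) := by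
      funext t; simp [Ham, Function.update_apply]
    rw [hfun]
    have h1 : HasDerivAt (fun t : ℝ => p 0 + t) 1 (p 1) := by
      simpa using (hasDerivAt_id (p 1)).const_add (p 0)
    have H := (((((h1.pow 2).const_mul ((1:ℝ)/9)).sub_const ((p 0) ^ 2 / 2)).sub
        ((hasDerivAt_pow 2 (p 1)).div_const 8)).const_mul
        ((Real.exp (q 0 + 4 * q 1))⁻¹)).sub_const
        ((A1 * Real.exp (-(q 0)) + A2 * Real.exp (-(q 1))) * Real.exp (q 0 + 4 * q 1))
    refine H.deriv.trans ?_; push_cast; ring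
  have hHq0 : pderivQ (Ham A1 A2) 0 q p =
      -(Real.exp (q 0 + 4 * q 1))⁻¹ *
        ((1 / 9) * (p 0 + p 1) ^ 2 - (p 0) ^ 2 / 2 - (p 1) ^ 2 / 8) -
        A2 * Real.exp (-(q 1)) * Real.exp (q 0 + 4 * q 1) := by
    unfold pderivQ
    have hfun : (fun t => Ham A1 A2 (Function.update q 0 t) p) =
        (fun t => (Real.exp (t + 4 * q 1))⁻¹ *
          ((1 / 9) * (p 0 + p 1) ^ 2 - (p 0) ^ 2 / 2 - (p 1) ^ 2 / 8) -
          (A1 * Real.exp (-t) + A2 * Real.exp (-(q 1))) * Real.exp (t + 4 * q 1)) := by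
      funext t; simp [Ham, Function.update_apply]
    rw [hfun]
    have h1 : HasDerivAt (fun t : ℝ => t + 4 * q 1) 1 (q 0) := by
      simpa using (hasDerivAt_id (q 0)).add_const (4 * q 1)
    have hev := h1.exp
    have hneg : HasDerivAt (fun t : ℝ => -t) (-1) (q 0) := by
      exact hasDerivAt_neg (q 0)
    have H := ((hev.inv (Real.exp_ne_zero _)).mul_const
        ((1 / 9) * (p 0 + p 1) ^ 2 - (p 0) ^ 2 / 2 - (p 1) ^ 2 / 8)).sub
        (((hneg.exp.const_mul A1).add_const (A2 * Real.exp (-(q 1)))).mul hev)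
    refine H.deriv.trans ?_
    have hv := Real.exp_ne_zero (q 0 + 4 * q 1)
    rw [Real.exp_neg (q 0)]
    field_simp
    ring
  have hHq1 : pderivQ (Ham A1 A2) 1 q p =
      -4 * (Real.exp (q 0 + 4 * q 1))⁻¹ *
        ((1 / 9) * (p 0 + p 1) ^ 2 - (p 0) ^ 2 / 2 - (p 1) ^ 2 / 8) -
        (4 * A1 * Real.exp (-(q 0)) + 3 * A2 * Real.exp (-(q 1))) *
          Real.exp (q 0 + 4 * q 1) := by
    unfold pderivQ
    have hfun : (fun t => Ham A1 A2 (Function.update q 1 t) p) =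
        (fun t => (Real.exp (q 0 + 4 * t))⁻¹ *
          ((1 / 9) * (p 0 + p 1) ^ 2 - (p 0) ^ 2 / 2 - (p 1) ^ 2 / 8) -
          (A1 * Real.exp (-(q 0)) + A2 * Real.exp (-t)) * Real.exp (q 0 + 4 * t)) := by
      funext t; simp [Ham, Function.update_apply]
    rw [hfun]
    have h1 : HasDerivAt (fun t : ℝ => q 0 + 4 * t) 4 (q 1) := by
      simpa using ((hasDerivAt_id (q 1)).const_mul 4).const_add (q 0)
    have hev := h1.exp
    have hneg : HasDerivAt (fun t : ℝ => -t) (-1) (q 1) := by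
      exact hasDerivAt_neg (q 1)
    have H := ((hev.inv (Real.exp_ne_zero _)).mul_const
        ((1 / 9) * (p 0 + p 1) ^ 2 - (p 0) ^ 2 / 2 - (p 1) ^ 2 / 8)).sub
        (((hneg.exp.const_mul A2).const_add (A1 * Real.exp (-(q 0)))).mul hev)
    refine H.deriv.trans ?_
    have hv := Real.exp_ne_zero (q 0 + 4 * q 1)
    rw [Real.exp_neg (q 1)]
    field_simp
    ring
  unfold poisson
  rw [Fin.sum_univ_two, hFq0, hFq1, hFp0, hFp1, hHp0, hHp1, hHq0, hHq1]
  unfold Ham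
  have hq0 : (q 0 : ℝ) = ((2:ℕ):ℝ) * (q 0 / 2) := by push_cast; ring
  have e0 : Real.exp (q 0) = Real.exp (q 0 / 2) ^ 2 := by
    conv_lhs => rw [hq0]
    rw [Real.exp_nat_mul]
  have ev : Real.exp (q 0 + 4 * q 1) =
      Real.exp (q 0 / 2) ^ 2 * Real.exp (q 1) ^ 4 := by
    rw [Real.exp_add, e0, show (4:ℝ) * q 1 = ((4:ℕ):ℝ) * q 1 by push_cast; ring,
      Real.exp_nat_mul]
  have ew : Real.exp (-(q 0) / 2 - 7 * q 1) =
      (Real.exp (q 0 / 2) * Real.exp (q 1) ^ 7)⁻¹ := by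
    rw [show -(q 0) / 2 - 7 * q 1 = -(q 0 / 2 + ((7:ℕ):ℝ) * q 1) by push_cast; ring,
      Real.exp_neg, Real.exp_add, Real.exp_nat_mul]
  have eu : Real.exp (q 0 / 2 + q 1) = Real.exp (q 0 / 2) * Real.exp (q 1) :=
    Real.exp_add _ _
  have en0 : Real.exp (-(q 0)) = (Real.exp (q 0 / 2) ^ 2)⁻¹ := by
    rw [Real.exp_neg, e0]
  have en1 : Real.exp (-(q 1)) = (Real.exp (q 1))⁻¹ := Real.exp_neg _
  rw [ev, ew, eu, en0, en1]
  have hX : Real.exp (q 0 / 2) ≠ 0 := Real.exp_ne_zero _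
  have hY : Real.exp (q 1) ≠ 0 := Real.exp_ne_zero _
  field_simp
  ring

/-- `F` is a generalized first integral of `H`: `{F,H} = φ·H` for a smooth `φ`;
in particular `{F,H}` vanishes on the zero set of `H`. -/
theorem two_eight_generalized_first_integral
    (A1 A2 : ℝ) (hA1 : 0 < A1) (hA2 : 0 < A2) :
    (∃ φ : ((Fin 2 → ℝ) × (Fin 2 → ℝ)) → ℝ, ContDiff ℝ (⊤ : ℕ∞) φ ∧
      ∀ q p : Fin 2 → ℝ,
        poisson (Fint A1) (Ham A1 A2) q p = φ (q, p) * Ham A1 A2 q p) ∧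
    (∀ q p : Fin 2 → ℝ, Ham A1 A2 q p = 0 → poisson (Fint A1) (Ham A1 A2) q p = 0) := by
  constructor
  · refine ⟨fun x => -(1/36) * (2 * x.2 0 - x.2 1) * Real.exp (-(x.1 0) / 2 - 7 * x.1 1),
      ?_, fun q p => key A1 A2 q p⟩
    fun_prop (disch := norm_num)
  · intro q p h
    rw [key A1 A2 q p, h, mul_zero]
end

section
/- Let r ≥ 2 and let d_1,…,d_r be positive real numbers with n := d_1+⋯+d_r > 1. Then J(d,d) = n/(n−1) > 0, and for every nonzero p ∈ ℝ^r with p_1+⋯+p_r = 0 one has J(p,p) = −Σ_i p_i²/d_i < 0. Consequently J is a nondegenerate quadratic form on ℝ^r of Lorentz signature (1, r−1): ℝ^r is the direct sum of the line spanned by d = (d_1,…,d_r), on which J is positive, and the hyperplane {p : Σ_i p_i = 0}, on which J is negative definite. -/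
/-- The symmetric bilinear form `J(a,b) = (Σaᵢ)(Σbᵢ)/(n−1) − Σ aᵢbᵢ/dᵢ` with `n = Σ dᵢ`. -/
noncomputable def Jbil {r : ℕ} (d : Fin r → ℝ) (a b : Fin r → ℝ) : ℝ :=
  (1 / ((∑ i, d i) - 1)) * (∑ i, a i) * (∑ i, b i) - ∑ i, a i * b i / d i

/-- `J` has Lorentz signature `(1, r−1)`: it is positive on the line spanned by `d`
(with `J(d,d) = n/(n−1)`), negative definite on the hyperplane `{Σᵢ pᵢ = 0}`
(with `J(p,p) = −Σ pᵢ²/dᵢ` there), nondegenerate, and `ℝ^r` is the direct sum of the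
line `ℝ·d` and that hyperplane. -/
theorem Jbil_lorentz_signature
    (r : ℕ) (hr : 2 ≤ r) (d : Fin r → ℝ) (hd : ∀ i, 0 < d i)
    (hn : 1 < ∑ i, d i) :
    Jbil d d d = (∑ i, d i) / ((∑ i, d i) - 1) ∧
    0 < Jbil d d d ∧
    (∀ p : Fin r → ℝ, (∑ i, p i) = 0 →
      (Jbil d p p = -∑ i, (p i) ^ 2 / d i ∧ (p ≠ 0 → Jbil d p p < 0))) ∧
    (∀ p : Fin r → ℝ, (∀ b : Fin r → ℝ, Jbil d p b = 0) → p = 0) ∧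
    (∀ p : Fin r → ℝ, ∃! x : ℝ × (Fin r → ℝ), p = x.1 • d + x.2 ∧ (∑ i, x.2 i) = 0) := by
  have hdne : ∀ i, d i ≠ 0 := fun i => (hd i).ne'
  have hn0 : (0:ℝ) < ∑ i, d i := lt_trans one_pos hn
  have hne : (∑ i, d i) - 1 ≠ 0 := by linarith
  have hnne : (∑ i, d i) ≠ 0 := hn0.ne'
  -- Part 1
  have hdd : Jbil d d d = (∑ i, d i) / ((∑ i, d i) - 1) := by
    unfold Jbil
    have h : ∀ i, d i * d i / d i = d i := fun i => by field_simp
    simp only [h]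
    field_simp
    ring
  -- Part 3
  have h3 : ∀ p : Fin r → ℝ, (∑ i, p i) = 0 → Jbil d p p = -∑ i, (p i) ^ 2 / d i := by
    intro p hp
    unfold Jbil
    rw [hp]
    simp [sq]
  refine ⟨hdd, by rw [hdd]; exact div_pos hn0 (by linarith), ?_, ?_, ?_⟩
  · intro p hp
    refine ⟨h3 p hp, fun hpne => ?_⟩
    rw [h3 p hp, neg_lt_zero]
    obtain ⟨i, hi⟩ := Function.ne_iff.mp hpne
    refine Finset.sum_pos' (fun j _ => div_nonneg (sq_nonneg _) (hd j).le)
      ⟨i, Finset.mem_univ i, ?_⟩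
    exact div_pos (lt_of_le_of_ne (sq_nonneg _) (Ne.symm (pow_ne_zero 2 hi))) (hd i)
  · intro p hp
    have hJd : Jbil d p d = (∑ i, p i) / ((∑ i, d i) - 1) := by
      unfold Jbil
      have h : ∀ i, p i * d i / d i = p i := fun i => by
        rw [mul_div_assoc, div_self (hdne i), mul_one]
      simp only [h]
      field_simp
      ring
    have hsum : ∑ i, p i = 0 := by
      have := hp d
      rw [hJd] at this
      exact (div_eq_zero_iff.mp this).resolve_right hne
    have h2 := hp p
    rw [h3 p hsum, neg_eq_zero] at h2
    have hz := (Finset.sum_eq_zero_iff_of_nonneg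
      (fun i _ => by have := hd i; positivity)).mp h2
    funext i
    have := hz i (Finset.mem_univ i)
    have h4 : p i ^ 2 = 0 := by
      rcases div_eq_zero_iff.mp this with h | h
      · exact h
      · exact absurd h (hdne i)
    simpa using pow_eq_zero_iff (n := 2) (by norm_num) |>.mp h4
  · intro p
    set c := (∑ i, p i) / (∑ i, d i) with hc
    refine ⟨(c, p - c • d), ⟨by funext i; simp, ?_⟩, ?_⟩
    · have : ∑ i, (p - c • d) i = (∑ i, p i) - c * ∑ i, d i := by
        simp [Finset.sum_sub_distrib, Finset.mul_sum]
      rw [this, hc]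
      field_simp
      ring
    · rintro ⟨a, q⟩ ⟨heq, hq⟩
      have hsump : ∑ i, p i = a * ∑ i, d i := by
        have : ∑ i, p i = ∑ i, (a * d i + q i) := by
          refine Finset.sum_congr rfl fun i _ => ?_
          rw [heq]; simp
        rw [this, Finset.sum_add_distrib, hq, ← Finset.mul_sum, add_zero]
      have ha : a = c := by
        rw [hc, hsump]
        field_simp
      have hqeq : q = p - c • d := by
        funext i
        have := congrFun heq i
        simp at this
        simp only [Pi.sub_apply, Pi.smul_apply, smul_eq_mul]
        rw [this, ha]
        ring
      simp [ha, hqeq]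
end
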